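/- Suppose the sliding mode holds on the second output channel: e_{y₂}(t) = 0 and ė_{y₂}(t) = 0 for all t ≥ T, where ė_{y₂} = -μ(t) + Ā₂₂e₂ + Φ₂(t)f(t) + W̃₂(t) with Φ₂(t) invertible, ‖W̃₂(t)‖ ≤ γ‖e₂(t)‖, and ‖Φ₂(t)⁻¹‖ ≤ M, ‖Φ₂(t)⁻¹Ā₂₂‖ ≤ M' uniformly. Define f̂(t) = Φ₂(t)⁻¹μ(t). If e₂(t) → 0 as t → ∞, then ‖f(t) - f̂(t)‖ ≤ (M' + γM)‖e₂(t)‖ for t ≥ T, and hence f̂(t) - f(t) → 0 as t → ∞. -/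

import Mathlib

open Matrix Filter

/-- Theorem 4.1: asymptotically exact fault reconstruction
from the equivalent output error injection on the sliding surface. -/
theorem stmt_12 {r m : ℕ} (T γ M M' : ℝ)
    (hγ : 0 < γ) (hM : 0 < M) (hM' : 0 < M')
    (Abar₂₂ : Matrix (Fin r) (Fin m) ℝ)
    (Φ₂ : ℝ → Matrix (Fin r) (Fin r) ℝ)
    (ey₂ : ℝ → EuclideanSpace ℝ (Fin r))
    (e₂ : ℝ → EuclideanSpace ℝ (Fin m))
    (f μ : ℝ → EuclideanSpace ℝ (Fin r))
    (Wtil : ℝ → Fin r → ℝ)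
    (hinv : ∀ t, IsUnit (Φ₂ t))
    (hdyn : ∀ t, deriv ey₂ t =
      -μ t + (WithLp.equiv 2 (Fin r → ℝ)).symm
        (Abar₂₂ *ᵥ e₂ t + Φ₂ t *ᵥ f t + Wtil t))
    (hslide : ∀ t ≥ T, ey₂ t = 0 ∧ deriv ey₂ t = 0)
    (hW : ∀ t, ‖(WithLp.equiv 2 (Fin r → ℝ)).symm (Wtil t)‖ ≤ γ * ‖e₂ t‖)
    (hMbound : ∀ t, ∀ v : EuclideanSpace ℝ (Fin r),
      ‖(WithLp.equiv 2 (Fin r → ℝ)).symm ((Φ₂ t)⁻¹ *ᵥ v)‖ ≤ M * ‖v‖)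
    (hM'bound : ∀ t, ∀ v : EuclideanSpace ℝ (Fin m),
      ‖(WithLp.equiv 2 (Fin r → ℝ)).symm (((Φ₂ t)⁻¹ * Abar₂₂) *ᵥ v)‖ ≤ M' * ‖v‖)
    (he₂ : Tendsto e₂ atTop (nhds 0)) :
    (∀ t ≥ T,
        ‖f t - (WithLp.equiv 2 (Fin r → ℝ)).symm ((Φ₂ t)⁻¹ *ᵥ μ t)‖
          ≤ (M' + γ * M) * ‖e₂ t‖) ∧
      Tendsto (fun t => (WithLp.equiv 2 (Fin r → ℝ)).symm ((Φ₂ t)⁻¹ *ᵥ μ t) - f t)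
        atTop (nhds 0) := by
  have key : ∀ t ≥ T,
      f t - (WithLp.equiv 2 (Fin r → ℝ)).symm ((Φ₂ t)⁻¹ *ᵥ μ t)
        = -((WithLp.equiv 2 (Fin r → ℝ)).symm (((Φ₂ t)⁻¹ * Abar₂₂) *ᵥ e₂ t)
            + (WithLp.equiv 2 (Fin r → ℝ)).symm ((Φ₂ t)⁻¹ *ᵥ Wtil t)) := by
    intro t ht
    have hd := hdyn t
    rw [(hslide t ht).2] at hd
    have hμ : μ t = (WithLp.equiv 2 (Fin r → ℝ)).symm
        (Abar₂₂ *ᵥ e₂ t + Φ₂ t *ᵥ f t + Wtil t) :=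
      neg_add_eq_zero.mp hd.symm
    have hdet : IsUnit (Φ₂ t).det := (Matrix.isUnit_iff_isUnit_det _).mp (hinv t)
    have hPi : ((Φ₂ t)⁻¹ *ᵥ μ t : Fin r → ℝ)
        = WithLp.equiv 2 (Fin r → ℝ) (f t)
          + (((Φ₂ t)⁻¹ * Abar₂₂) *ᵥ e₂ t + (Φ₂ t)⁻¹ *ᵥ Wtil t) := by
      conv_lhs => rw [hμ]
      show (Φ₂ t)⁻¹ *ᵥ (Abar₂₂ *ᵥ e₂ t + Φ₂ t *ᵥ f t + Wtil t) = _
      rw [Matrix.mulVec_add, Matrix.mulVec_add, Matrix.mulVec_mulVec,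
        Matrix.mulVec_mulVec, Matrix.nonsing_inv_mul _ hdet, Matrix.one_mulVec]
      funext i
      simp only [Pi.add_apply, WithLp.equiv_apply]
      ring
    have h2 := congrArg (WithLp.equiv 2 (Fin r → ℝ)).symm hPi
    simp only [WithLp.equiv_symm_apply, WithLp.toLp_add, WithLp.equiv_apply, WithLp.toLp_ofLp] at h2 ⊢
    rw [h2]
    abel
  have bound : ∀ t ≥ T,
      ‖f t - (WithLp.equiv 2 (Fin r → ℝ)).symm ((Φ₂ t)⁻¹ *ᵥ μ t)‖
        ≤ (M' + γ * M) * ‖e₂ t‖ := by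
    intro t ht
    rw [key t ht, norm_neg]
    calc ‖(WithLp.equiv 2 (Fin r → ℝ)).symm (((Φ₂ t)⁻¹ * Abar₂₂) *ᵥ e₂ t)
            + (WithLp.equiv 2 (Fin r → ℝ)).symm ((Φ₂ t)⁻¹ *ᵥ Wtil t)‖
        ≤ ‖(WithLp.equiv 2 (Fin r → ℝ)).symm (((Φ₂ t)⁻¹ * Abar₂₂) *ᵥ e₂ t)‖
            + ‖(WithLp.equiv 2 (Fin r → ℝ)).symm ((Φ₂ t)⁻¹ *ᵥ Wtil t)‖ :=
          norm_add_le _ _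
      _ ≤ M' * ‖e₂ t‖ + M * ‖(WithLp.equiv 2 (Fin r → ℝ)).symm (Wtil t)‖ := by
          gcongr
          · exact hM'bound t (e₂ t)
          · exact hMbound t ((WithLp.equiv 2 (Fin r → ℝ)).symm (Wtil t))
      _ ≤ M' * ‖e₂ t‖ + M * (γ * ‖e₂ t‖) := by
          gcongr
          exact hW t
      _ = (M' + γ * M) * ‖e₂ t‖ := by ring
  refine ⟨bound, ?_⟩
  have hg : Tendsto (fun t => (M' + γ * M) * ‖e₂ t‖) atTop (nhds 0) := by
    have := (he₂.norm : Tendsto (fun t => ‖e₂ t‖) atTop (nhds ‖(0 : EuclideanSpace ℝ (Fin m))‖))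
    rw [norm_zero] at this
    simpa using this.const_mul (M' + γ * M)
  apply squeeze_zero_norm' ?_ hg
  filter_upwards [eventually_ge_atTop T] with t ht
  rw [← norm_neg, neg_sub]
  exact bound t ht
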